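/- Let λ, A, B ∈ ℂ with |λ| > 1 and A, B ≠ 0, and for n ∈ ℕ set yₙ = Aλⁿ + Bλ⁻ⁿ. Assume yₙ ≠ 0 for all n ≥ 0 (in particular A + B = y₀ ≠ 0). Then the series ∑_{n=0}^{∞} 1/(yₙ y_{n+1}) converges and its sum equals 1/(A(A+B)(λ − λ⁻¹)). -/

import Mathlib

open Filter

/-- For `λ, A, B ∈ ℂ` with `|λ| > 1`, `A, B ≠ 0`, and
`yₙ = Aλⁿ + Bλ⁻ⁿ` for `n ∈ ℕ` all nonzero, the series `∑ 1/(yₙ y_{n+1})`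
converges with sum `1/(A(A+B)(λ − λ⁻¹))`. -/
theorem sum_one_div_y_mul_y_succ_nat (lam A B : ℂ) (hlam : 1 < ‖lam‖)
    (hA : A ≠ 0) (hB : B ≠ 0) (y : ℕ → ℂ)
    (hy : ∀ n : ℕ, y n = A * lam ^ n + B * lam⁻¹ ^ n)
    (hy0 : ∀ n : ℕ, y n ≠ 0) :
    Tendsto (fun N : ℕ => ∑ n ∈ Finset.range N, 1 / (y n * y (n + 1))) atTop
      (nhds (1 / (A * (A + B) * (lam - lam⁻¹)))) := by
  have hlne : lam ≠ 0 := by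
    intro h
    simp [h] at hlam
    linarith
  have hinv : ‖lam⁻¹‖ < 1 := by
    rw [norm_inv]
    rw [inv_lt_one_iff₀]
    right; exact hlam
  have hd : lam - lam⁻¹ ≠ 0 := by
    intro h
    have h1 : lam = lam⁻¹ := sub_eq_zero.mp h
    have : ‖lam‖ = ‖lam⁻¹‖ := by rw [← h1]
    linarith
  have hAB : A + B ≠ 0 := by
    have := hy0 0
    rw [hy 0] at this
    simpa using this
  set w : ℂ := lam⁻¹ * lam⁻¹ with hw
  have hfact : ∀ n : ℕ, y n = lam ^ n * (A + B * w ^ n) := by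
    intro n
    rw [hy n, hw, mul_pow]
    have hinvn : lam ^ n * lam⁻¹ ^ n = 1 := by rw [← mul_pow, mul_inv_cancel₀ hlne, one_pow]
    linear_combination (-(B * lam⁻¹ ^ n)) * hinvn
  have hne2 : ∀ n : ℕ, A + B * w ^ n ≠ 0 := by
    intro n
    have := hy0 n
    rw [hfact n] at this
    exact right_ne_zero_of_mul this
  set t : ℕ → ℂ := fun n => 1 / (A + B * w ^ n) with ht
  have hwl : w * lam = lam⁻¹ := by
    rw [hw, mul_assoc, inv_mul_cancel₀ hlne, mul_one]
  have hw1 : w * lam * lam = 1 := by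
    rw [hwl, inv_mul_cancel₀ hlne]
  have key : ∀ n : ℕ, 1 / (y n * y (n + 1)) =
      (t (n + 1) - t n) / (B * (lam - lam⁻¹)) := by
    intro n
    have hp1 : lam ^ n ≠ 0 := pow_ne_zero _ hlne
    have hp2 : lam ^ (n + 1) ≠ 0 := pow_ne_zero _ hlne
    have hD1 := hne2 n
    have hD2 := hne2 (n + 1)
    have hkey0 : w ^ n * (1 - w) * (lam ^ n * lam ^ (n + 1)) = lam - lam⁻¹ := by
      calc w ^ n * (1 - w) * (lam ^ n * lam ^ (n + 1))
          = (w * lam * lam) ^ n * ((1 - w) * lam) := by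
            rw [mul_pow, mul_pow, pow_succ]; ring
        _ = (1 - w) * lam := by rw [hw1, one_pow, one_mul]
        _ = lam - lam⁻¹ := by rw [sub_mul, one_mul, ← hwl]
    rw [hfact n, hfact (n + 1)]
    simp only [ht]
    rw [div_sub_div 1 1 hD2 hD1, div_div,
      div_eq_div_iff (mul_ne_zero (mul_ne_zero hp1 hD1) (mul_ne_zero hp2 hD2))
        (mul_ne_zero (mul_ne_zero hD2 hD1) (mul_ne_zero hB hd)), ← hkey0]
    ring
  have hsum : ∀ N : ℕ, ∑ n ∈ Finset.range N, 1 / (y n * y (n + 1)) =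
      (t N - t 0) / (B * (lam - lam⁻¹)) := by
    intro N
    rw [← Finset.sum_range_sub t N, Finset.sum_div]
    exact Finset.sum_congr rfl fun n _ => key n
  simp only [hsum]
  have hwlt : ‖w‖ < 1 := by
    have : ‖w‖ = ‖lam⁻¹‖ * ‖lam⁻¹‖ := by
      simp [hw]
    rw [this]
    nlinarith [norm_nonneg lam⁻¹]
  have htend : Tendsto t atTop (nhds (1 / A)) := by
    have h0 : Tendsto (fun n : ℕ => A + B * w ^ n) atTop (nhds A) := by
      have := (tendsto_pow_atTop_nhds_zero_of_norm_lt_one hwlt).const_mul B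
      simpa using tendsto_const_nhds.add this
    have h1 : Tendsto (fun n : ℕ => 1 / (A + B * w ^ n)) atTop (nhds (1 / A)) := by
      simpa [one_div] using h0.inv₀ hA
    exact h1
  have hfin := (htend.sub_const (t 0)).div_const (B * (lam - lam⁻¹))
  have ht0 : t 0 = 1 / (A + B) := by simp [ht]
  have hval : (1 / A - t 0) / (B * (lam - lam⁻¹)) =
      1 / (A * (A + B) * (lam - lam⁻¹)) := by
    rw [ht0]
    rw [div_eq_div_iff (by exact mul_ne_zero hB hd)
      (mul_ne_zero (mul_ne_zero hA hAB) hd)]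
    field_simp
    ring
  rw [← hval]
  exact hfin
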